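/- Three-term contiguous relation (A&A comparison, fourth form): Let a,b,c,d,e ∈ ℂ with a,c,e ≠ 0, |bd/(qace)| < 1, and all denominators appearing below nonzero. Set Y_q = (a−b)(b−c)(b−e)(d−q)·d / [(1−b)(qa−d)·(qabce + bcd + bde − b²d − acde − qbce)] and Z_q = (1−a)(d−qb)(qace−bd) / [(qa−d)·(qabce + bcd + bde − b²d − acde − qbce)]. Then ₃φ₂(a,c,e; b,d; q, bd/(ace)) = Y_q·₃φ₂(a, c, e; qb, d/q; q, bd/(ace)) + Z_q·₃φ₂(qa, c, e; b, d; q, bd/(qace)). -/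

import Mathlib

noncomputable def qPoch (q x : ℂ) (k : ℕ) : ℂ :=
  ∏ i ∈ Finset.range k, (1 - x * q ^ i)

/-- The basic hypergeometric series ₃φ₂(a,c,e; b,d; q, z). -/
noncomputable def phi32 (q z a c e b d : ℂ) : ℂ :=
  ∑' k : ℕ, (qPoch q a k * qPoch q c k * qPoch q e k) /
      (qPoch q b k * qPoch q d k * qPoch q q k) * z ^ k

open Filter Topology

lemma qPoch_succ (q x : ℂ) (k : ℕ) : qPoch q x (k+1) = qPoch q x k * (1 - x * q ^ k) :=
  Finset.prod_range_succ _ _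

lemma qPoch_shift (q x : ℂ) (k : ℕ) :
    (1 - x) * qPoch q (q * x) k = qPoch q x k * (1 - x * q ^ k) := by
  induction k with
  | zero => simp [qPoch]
  | succ k ih =>
      rw [qPoch_succ, qPoch_succ]
      linear_combination (1 - q * x * q ^ k) * ih

lemma qPoch_factor_ne {q x : ℂ} {k : ℕ} (h : qPoch q x (k+1) ≠ 0) : 1 - x * q ^ k ≠ 0 := by
  rw [qPoch_succ] at h
  exact right_ne_zero_of_mul h

lemma one_sub_q_pow_ne {q : ℂ} (hq1 : ‖q‖ < 1) (k : ℕ) : 1 - q * q ^ k ≠ 0 := by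
  intro h
  have h2 : q * q ^ k = 1 := by linear_combination -h
  have : ‖q * q ^ k‖ < 1 := by
    calc ‖q * q ^ k‖ = ‖q‖ * ‖q‖ ^ k := by rw [norm_mul, norm_pow]
    _ ≤ ‖q‖ * 1 := by
        have h0 : (0:ℝ) ≤ ‖q‖ := norm_nonneg _
        have : ‖q‖ ^ k ≤ 1 := pow_le_one₀ h0 hq1.le
        nlinarith
    _ < 1 := by simpa using hq1
  rw [h2] at this
  simp at this

lemma qPoch_q_ne {q : ℂ} (hq1 : ‖q‖ < 1) (k : ℕ) : qPoch q q k ≠ 0 := by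
  unfold qPoch
  rw [Finset.prod_ne_zero_iff]
  exact fun i _ => one_sub_q_pow_ne hq1 i

lemma summable_of_ratio_tendsto {t r : ℕ → ℂ} {L : ℂ} (hL : ‖L‖ < 1)
    (hrel : ∀ k, t (k+1) = t k * r k) (hr : Tendsto r atTop (𝓝 L)) : Summable t := by
  set ρ : ℝ := (‖L‖ + 1) / 2 with hρ
  have hρ1 : ρ < 1 := by rw [hρ]; linarith
  have hLρ : ‖L‖ < ρ := by rw [hρ]; linarith
  have hev : ∀ᶠ k in atTop, ‖r k‖ < ρ := (hr.norm).eventually_lt_const hLρ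
  refine summable_of_ratio_norm_eventually_le hρ1 ?_
  filter_upwards [hev] with k hk
  rw [hrel k, norm_mul, mul_comm]
  exact mul_le_mul_of_nonneg_right hk.le (norm_nonneg _)

lemma tendsto_one_sub (q : ℂ) (hq1 : ‖q‖ < 1) (x : ℂ) :
    Tendsto (fun k : ℕ => 1 - x * q ^ k) atTop (𝓝 1) := by
  have h0 : Tendsto (fun k : ℕ => (q : ℂ) ^ k) atTop (𝓝 0) :=
    tendsto_pow_atTop_nhds_zero_of_norm_lt_one hq1
  simpa using tendsto_const_nhds.sub (h0.const_mul x)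

set_option maxHeartbeats 1000000 in
lemma summable_phi (q z A C E B D : ℂ) (hq1 : ‖q‖ < 1) (hz : ‖z‖ < 1)
    (hB : ∀ k, qPoch q B k ≠ 0) (hD : ∀ k, qPoch q D k ≠ 0) :
    Summable (fun k : ℕ => qPoch q A k * qPoch q C k * qPoch q E k /
      (qPoch q B k * qPoch q D k * qPoch q q k) * z ^ k) := by
  set r : ℕ → ℂ := fun k =>
    (1 - A * q ^ k) * (1 - C * q ^ k) * (1 - E * q ^ k) /
      ((1 - B * q ^ k) * (1 - D * q ^ k) * (1 - q * q ^ k)) * z with hrdef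
  have hrel : ∀ k, (qPoch q A (k+1) * qPoch q C (k+1) * qPoch q E (k+1) /
      (qPoch q B (k+1) * qPoch q D (k+1) * qPoch q q (k+1)) * z ^ (k+1)) =
      (qPoch q A k * qPoch q C k * qPoch q E k /
      (qPoch q B k * qPoch q D k * qPoch q q k) * z ^ k) * r k := by
    intro k
    have hBk := hB k; have hDk := hD k; have hqk := qPoch_q_ne hq1 k
    have hB1 := qPoch_factor_ne (hB (k+1))
    have hD1 := qPoch_factor_ne (hD (k+1))
    have hq1' := one_sub_q_pow_ne hq1 k
    rw [hrdef]
    simp only [qPoch_succ, pow_succ]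
    field_simp
  have hlim : Tendsto r atTop (𝓝 ((1 * 1 * 1) / (1 * 1 * 1) * z)) := by
    apply Tendsto.mul_const
    exact Tendsto.div
      (((tendsto_one_sub q hq1 A).mul (tendsto_one_sub q hq1 C)).mul (tendsto_one_sub q hq1 E))
      (((tendsto_one_sub q hq1 B).mul (tendsto_one_sub q hq1 D)).mul (tendsto_one_sub q hq1 q))
      (by norm_num)
  have hlim' : Tendsto r atTop (𝓝 z) := by
    rw [show ((1:ℂ)*1*1)/(1*1*1)*z = z by ring] at hlim; exact hlim
  exact summable_of_ratio_tendsto hz hrel hlim'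

lemma scalar_key (a b c e w s A V iB : ℂ) (hV : V * A = 1) (hiB : iB * (1 - b*s) = 1)
    (hA : A = (a-w) * (a*b*c*e + b*c*w + b*w*e - b^2*w - a*c*w*e - b*c*e)) :
    s = (b-a)*(b-c)*(b-e)*w*V*(s*(1-w*s)*iB)
      + (w-b)*(a*c*e-b*w)*V*(1-a*s)
      + b*w*(w-b)*V*((1-a*s)*(1-c*s)*(1-e*s)*iB)
      - a*c*e*(w-b)*V*((1-s)*(1-w*s)) := by
  have SP : s * A * (1-b*s) = (b-a)*(b-c)*(b-e)*w*(s*(1-w*s))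
      + (w-b)*(a*c*e-b*w)*(1-a*s)*(1-b*s)
      + b*w*(w-b)*((1-a*s)*(1-c*s)*(1-e*s))
      - a*c*e*(w-b)*((1-s)*(1-w*s))*(1-b*s) := by rw [hA]; ring
  linear_combination (V*iB)*SP - (s*iB*(1-b*s))*hV - s*hiB
    + (V*((w-b)*(a*c*e-b*w)*(1-a*s) - a*c*e*(w-b)*((1-s)*(1-w*s))))*hiB

set_option maxHeartbeats 3000000 in
theorem aux (q a b c e w Y Z : ℂ) (hqne : q ≠ 0) (hq1' : ‖q‖ < 1)
    (ha : a ≠ 0) (hc : c ≠ 0) (he : e ≠ 0)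
    (hzq1 : ‖b * (q*w) / (q*a*c*e)‖ < 1)
    (hY : Y = (a-b)*(b-c)*(b-e)*((q*w)-q)*(q*w) / ((1-b)*(q*a-(q*w))*(q*a*b*c*e + b*c*(q*w) + b*(q*w)*e - b^2*(q*w) - a*c*(q*w)*e - q*b*c*e)))
    (hZ : Z = (1-a)*((q*w)-q*b)*(q*a*c*e - b*(q*w)) / ((q*a-(q*w))*(q*a*b*c*e + b*c*(q*w) + b*(q*w)*e - b^2*(q*w) - a*c*(q*w)*e - q*b*c*e)))
    (h1 : 1 - b ≠ 0) (h2 : q*a - q*w ≠ 0)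
    (h3 : q*a*b*c*e + b*c*(q*w) + b*(q*w)*e - b^2*(q*w) - a*c*(q*w)*e - q*b*c*e ≠ 0)
    (hp0 : ∀ k, qPoch q b k ≠ 0) (hp1 : ∀ k, qPoch q (q*w) k ≠ 0)
    (hp2 : ∀ k, qPoch q (q*b) k ≠ 0) (hp3 : ∀ k, qPoch q w k ≠ 0) :
    phi32 q (b*(q*w)/(a*c*e)) a c e b (q*w) =
      Y * phi32 q (b*(q*w)/(a*c*e)) a c e (q*b) w +
      Z * phi32 q (b*(q*w)/(q*a*c*e)) (q*a) c e b (q*w) := by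
  have hacene : a*c*e ≠ 0 := mul_ne_zero (mul_ne_zero ha hc) he
  have hqacene : q*a*c*e ≠ 0 := mul_ne_zero (mul_ne_zero (mul_ne_zero hqne ha) hc) he
  set zq := b * (q*w) / (q*a*c*e) with hzqdef
  have hzzq : b*(q*w)/(a*c*e) = zq * q := by rw [hzqdef]; field_simp
  have hzz1 : ‖b*(q*w)/(a*c*e)‖ < 1 := by
    rw [hzzq, norm_mul]
    nlinarith [norm_nonneg zq, norm_nonneg q, hzq1, hq1']
  have h1w : (1:ℂ) - w ≠ 0 := by simpa using qPoch_factor_ne (hp3 1)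
  have hβne : (a*b*c*e + b*c*w + b*w*e - b^2*w - a*c*w*e - b*c*e) ≠ 0 := by
    intro h0; apply h3; linear_combination q*h0
  have hawne : a - w ≠ 0 := by intro h0; apply h2; linear_combination q*h0
  set A := (a-w)*(a*b*c*e + b*c*w + b*w*e - b^2*w - a*c*w*e - b*c*e) with hAdef
  have hAne : A ≠ 0 := mul_ne_zero hawne hβne
  set V := A⁻¹ with hVdef
  have hV : V * A = 1 := inv_mul_cancel₀ hAne
  have hDne : (1-b)*(q*a-q*w)*(q*a*b*c*e + b*c*(q*w) + b*(q*w)*e - b^2*(q*w) - a*c*(q*w)*e - q*b*c*e) ≠ 0 :=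
    mul_ne_zero (mul_ne_zero h1 h2) h3
  have cY : Y * ((1-b)/(1-w)) = (b-a)*(b-c)*(b-e)*w*V := by
    rw [hY, div_mul_div_comm, div_eq_iff (mul_ne_zero hDne h1w)]
    linear_combination (-((b-a)*(b-c)*(b-e)*w*(1-b)*(1-w)*q^2))*hV
  have cZ : Z = (1-a) * ((w-b)*(a*c*e-b*w)*V) := by
    rw [hZ, div_eq_iff (mul_ne_zero h2 h3)]
    linear_combination (-((1-a)*(w-b)*(a*c*e-b*w)*q^2))*hV
  set K := a*c*e*(w-b)*V with hKdef
  have cKz : K * zq = b*w*(w-b)*V := by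
    rw [hKdef, hzqdef]; field_simp
  set f : ℕ → ℂ := fun k => (qPoch q a k * qPoch q c k * qPoch q e k) /
      (qPoch q b k * qPoch q (q*w) k * qPoch q q k) * (b*(q*w)/(a*c*e)) ^ k with hfdef
  set g : ℕ → ℂ := fun k => (qPoch q a k * qPoch q c k * qPoch q e k) /
      (qPoch q (q*b) k * qPoch q w k * qPoch q q k) * (b*(q*w)/(a*c*e)) ^ k with hgdef
  set hh : ℕ → ℂ := fun k => (qPoch q (q*a) k * qPoch q c k * qPoch q e k) /
      (qPoch q b k * qPoch q (q*w) k * qPoch q q k) * zq ^ k with hhdef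
  set U : ℕ → ℂ := fun k => (qPoch q a k * qPoch q c k * qPoch q e k) /
      (qPoch q b k * qPoch q (q*w) k * qPoch q q k) * zq ^ k with hUdef
  set W : ℕ → ℂ := fun k => K * (U k * ((1 - q^k) * (1 - w*q^k))) with hWdef
  have key : ∀ k, f k - Y * g k - Z * hh k = W (k+1) - W k := by
    intro k
    have hPb := hp0 k; have hPd := hp1 k; have hPq := qPoch_q_ne hq1' k
    have hPqb := hp2 k; have hPw := hp3 k
    have hfb : 1 - b*q^k ≠ 0 := qPoch_factor_ne (hp0 (k+1))
    have hfd : 1 - q*w*q^k ≠ 0 := qPoch_factor_ne (hp1 (k+1))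
    have hfw : 1 - w*q^k ≠ 0 := qPoch_factor_ne (hp3 (k+1))
    have hfq : 1 - q*q^k ≠ 0 := one_sub_q_pow_ne hq1' k
    have H1 : (1-b) * qPoch q (q*b) k = qPoch q b k * (1 - b*q^k) := qPoch_shift q b k
    have H2 : (1-w) * qPoch q (q*w) k = qPoch q w k * (1 - w*q^k) := qPoch_shift q w k
    have H3 : (1-a) * qPoch q (q*a) k = qPoch q a k * (1 - a*q^k) := qPoch_shift q a k
    have e1 : f k = U k * q^k := by
      simp only [hfdef, hUdef]; rw [hzzq, mul_pow]; ring
    have hPqbe : qPoch q (q*b) k = qPoch q b k * (1 - b*q^k) / (1-b) := by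
      rw [eq_div_iff h1]; linear_combination H1
    have hPwe : qPoch q w k = (1-w) * qPoch q (q*w) k / (1 - w*q^k) := by
      rw [eq_div_iff hfw]; linear_combination -H2
    have pg : g k = U k * (q^k * ((1-b)/(1-w)) * ((1-w*q^k)*(1-b*q^k)⁻¹)) := by
      simp only [hgdef, hUdef]
      rw [hPqbe, hPwe, hzzq, mul_pow]
      field_simp
    have e2 : Y * g k = U k * ((b-a)*(b-c)*(b-e)*w*V*(q^k*(1-w*q^k)*(1-b*q^k)⁻¹)) := by
      rw [pg]; linear_combination (U k * q^k * ((1-w*q^k)*(1-b*q^k)⁻¹)) * cY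
    have e3 : Z * hh k = U k * ((w-b)*(a*c*e-b*w)*V*(1-a*q^k)) := by
      rw [cZ]; simp only [hhdef, hUdef]
      linear_combination ((w-b)*(a*c*e-b*w)*V*(qPoch q c k * qPoch q e k /
        (qPoch q b k * qPoch q (q*w) k * qPoch q q k) * zq^k)) * H3
    have paux : U (k+1) * ((1 - q^(k+1))*(1 - w*q^(k+1))) =
        (U k * zq) * ((1-a*q^k)*(1-c*q^k)*(1-e*q^k)*(1-b*q^k)⁻¹) := by
      simp only [hUdef, qPoch_succ, pow_succ]
      clear_value zq
      rw [div_mul_eq_mul_div, div_mul_eq_mul_div, div_mul_eq_mul_div, div_mul_eq_mul_div, ← div_eq_mul_inv, mul_div_assoc', div_mul_eq_mul_div, div_div, div_eq_div_iff (mul_ne_zero (mul_ne_zero (mul_ne_zero hPb hfb) (mul_ne_zero hPd hfd)) (mul_ne_zero hPq hfq)) (mul_ne_zero (mul_ne_zero (mul_ne_zero hPb hPd) hPq) hfb)]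
      ring
    have e4 : W (k+1) = U k * (b*w*(w-b)*V*((1-a*q^k)*(1-c*q^k)*(1-e*q^k)*(1-b*q^k)⁻¹)) := by
      calc W (k+1) = K * (U (k+1) * ((1 - q^(k+1))*(1 - w*q^(k+1)))) := by simp only [hWdef]
        _ = K * ((U k * zq) * ((1-a*q^k)*(1-c*q^k)*(1-e*q^k)*(1-b*q^k)⁻¹)) := by rw [paux]
        _ = (K * zq) * (U k * ((1-a*q^k)*(1-c*q^k)*(1-e*q^k)*(1-b*q^k)⁻¹)) := by ring
        _ = _ := by rw [cKz]; ring
    have e5 : W k = U k * (a*c*e*(w-b)*V*((1-q^k)*(1-w*q^k))) := by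
      simp only [hWdef, hKdef]; ring
    have hiB : (1-b*q^k)⁻¹ * (1-b*q^k) = 1 := inv_mul_cancel₀ hfb
    have SC := scalar_key a b c e w (q^k) A V ((1-b*q^k)⁻¹) hV hiB hAdef
    linear_combination e1 - e2 - e3 - e4 + e5 + (U k) * SC
  have hW0 : W 0 = 0 := by simp [hWdef]
  have part : ∀ N, (∑ k ∈ Finset.range N, f k) - Y*(∑ k ∈ Finset.range N, g k)
      - Z*(∑ k ∈ Finset.range N, hh k) = W N := by
    intro N
    induction N with
    | zero => simp [hW0]
    | succ n ih =>
        rw [Finset.sum_range_succ, Finset.sum_range_succ, Finset.sum_range_succ]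
        linear_combination ih + key n
  have Sf : Summable f := by
    rw [hfdef]; exact summable_phi q _ a c e b (q*w) hq1' hzz1 hp0 hp1
  have Sg : Summable g := by
    rw [hgdef]; exact summable_phi q _ a c e (q*b) w hq1' hzz1 hp2 hp3
  have Sh : Summable hh := by
    rw [hhdef]; exact summable_phi q _ (q*a) c e b (q*w) hq1' hzq1 hp0 hp1
  have SU : Summable U := by
    rw [hUdef]; exact summable_phi q _ a c e b (q*w) hq1' hzq1 hp0 hp1
  have hWlim : Tendsto W atTop (𝓝 0) := by
    have hU0 : Tendsto U atTop (𝓝 0) := SU.tendsto_atTop_zero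
    have h1t : Tendsto (fun k : ℕ => (1:ℂ) - q^k) atTop (𝓝 1) := by
      simpa using tendsto_one_sub q hq1' 1
    have h2t : Tendsto (fun k : ℕ => (1:ℂ) - w*q^k) atTop (𝓝 1) := tendsto_one_sub q hq1' w
    have hcomb := (hU0.mul (h1t.mul h2t)).const_mul K
    rw [hWdef]
    simpa using hcomb
  have hFs : Tendsto (fun N => ∑ k ∈ Finset.range N, f k) atTop (𝓝 (∑' k, f k)) :=
    Sf.hasSum.tendsto_sum_nat
  have hGs : Tendsto (fun N => ∑ k ∈ Finset.range N, g k) atTop (𝓝 (∑' k, g k)) :=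
    Sg.hasSum.tendsto_sum_nat
  have hHs : Tendsto (fun N => ∑ k ∈ Finset.range N, hh k) atTop (𝓝 (∑' k, hh k)) :=
    Sh.hasSum.tendsto_sum_nat
  have hcomb2 : Tendsto (fun N => (∑ k ∈ Finset.range N, f k) - Y*(∑ k ∈ Finset.range N, g k)
      - Z*(∑ k ∈ Finset.range N, hh k)) atTop (𝓝 ((∑' k, f k) - Y*(∑' k, g k) - Z*(∑' k, hh k))) :=
    (hFs.sub (hGs.const_mul Y)).sub (hHs.const_mul Z)
  have heqW : (fun N => (∑ k ∈ Finset.range N, f k) - Y*(∑ k ∈ Finset.range N, g k)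
      - Z*(∑ k ∈ Finset.range N, hh k)) = W := funext part
  rw [heqW] at hcomb2
  have hzero : (∑' k, f k) - Y*(∑' k, g k) - Z*(∑' k, hh k) = 0 :=
    tendsto_nhds_unique hcomb2 hWlim
  have pf : phi32 q (b*(q*w)/(a*c*e)) a c e b (q*w) = ∑' k, f k := by
    rw [phi32, hfdef]
  have pG : phi32 q (b*(q*w)/(a*c*e)) a c e (q*b) w = ∑' k, g k := by
    rw [phi32, hgdef]
  have pH : phi32 q (b*(q*w)/(q*a*c*e)) (q*a) c e b (q*w) = ∑' k, hh k := by
    rw [phi32, hhdef]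
  rw [pf, pG, pH]
  linear_combination hzero

theorem threeTerm_AA4 (q a b c d e Y Z : ℂ)
    (hq0 : 0 < ‖q‖) (hq1 : ‖q‖ < 1)
    (ha : a ≠ 0) (hc : c ≠ 0) (he : e ≠ 0)
    (hconv : ‖b * d / (q * a * c * e)‖ < 1)
    (hY : Y = (a - b) * (b - c) * (b - e) * (d - q) * d / ((1 - b) * (q * a - d) * (q * a * b * c * e + b * c * d + b * d * e - b ^ 2 * d - a * c * d * e - q * b * c * e)))
    (hZ : Z = (1 - a) * (d - q * b) * (q * a * c * e - b * d) / ((q * a - d) * (q * a * b * c * e + b * c * d + b * d * e - b ^ 2 * d - a * c * d * e - q * b * c * e)))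
    (h1 : 1 - b ≠ 0) (h2 : q * a - d ≠ 0) (h3 : q * a * b * c * e + b * c * d + b * d * e - b ^ 2 * d - a * c * d * e - q * b * c * e ≠ 0)
    (hp0 : ∀ k, qPoch q (b) k ≠ 0) (hp1 : ∀ k, qPoch q (d) k ≠ 0) (hp2 : ∀ k, qPoch q (q * b) k ≠ 0) (hp3 : ∀ k, qPoch q (d / q) k ≠ 0) :
    phi32 q (b * d / (a * c * e)) a c e b d =
      Y * phi32 q (b * d / (a * c * e)) a c e (q * b) (d / q) +
      Z * phi32 q (b * d / (q * a * c * e)) (q * a) c e b d := by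
  have hqne : q ≠ 0 := by intro h0; rw [h0] at hq0; simp at hq0
  have hq1' : ‖q‖ < 1 := by exact hq1
  have hd : q * (d/q) = d := by field_simp
  have hzq' : ‖b * (q*(d/q)) / (q*a*c*e)‖ < 1 := by
    rw [hd]; exact hconv
  have hY' : Y = (a-b)*(b-c)*(b-e)*((q*(d/q))-q)*(q*(d/q)) / ((1-b)*(q*a-(q*(d/q)))*(q*a*b*c*e + b*c*(q*(d/q)) + b*(q*(d/q))*e - b^2*(q*(d/q)) - a*c*(q*(d/q))*e - q*b*c*e)) := by
    rw [hd]; exact hY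
  have hZ' : Z = (1-a)*((q*(d/q))-q*b)*(q*a*c*e - b*(q*(d/q))) / ((q*a-(q*(d/q)))*(q*a*b*c*e + b*c*(q*(d/q)) + b*(q*(d/q))*e - b^2*(q*(d/q)) - a*c*(q*(d/q))*e - q*b*c*e)) := by
    rw [hd]; exact hZ
  have h2' : q*a - q*(d/q) ≠ 0 := by rw [hd]; exact h2
  have h3' : q*a*b*c*e + b*c*(q*(d/q)) + b*(q*(d/q))*e - b^2*(q*(d/q)) - a*c*(q*(d/q))*e - q*b*c*e ≠ 0 := by
    rw [hd]; exact h3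
  have hp1' : ∀ k, qPoch q (q*(d/q)) k ≠ 0 := by
    intro k; rw [hd]; exact hp1 k
  have main := aux q a b c e (d/q) Y Z hqne hq1' ha hc he hzq' hY' hZ' h1 h2' h3' hp0 hp1' hp2 hp3
  rw [hd] at main
  exact main
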